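/- Every candidate orbit (z_n)_{n≥0} of complex numbers is realised by some continuous map f : ℂ → ℂ, i.e., there exists a continuous f : ℂ → ℂ with f(z_n) = z_{n+1} for all n ≥ 0. -/
import Mathlib

open Filter Topology

/-- A sequence of complex numbers is a *candidate orbit* if, whenever a
subsequence converges to a point `w`, the shifted subsequence converges to a
limit depending only on `w`. -/
def CandidateOrbit (z : ℕ → ℂ) : Prop :=
  ∀ w : ℂ, ∃ w' : ℂ, ∀ nj : ℕ → ℕ,
    Tendsto (fun j => z (nj j)) atTop (𝓝 w) →
    Tendsto (fun j => z (nj j + 1)) atTop (𝓝 w')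

theorem stmt_1 (z : ℕ → ℂ) (hz : CandidateOrbit z) :
    ∃ f : ℂ → ℂ, Continuous f ∧ ∀ n : ℕ, f (z n) = z (n + 1) := by
  classical
  set g : ℂ → ℂ := fun w => (hz w).choose with hg
  have hspec : ∀ w : ℂ, ∀ nj : ℕ → ℕ,
      Tendsto (fun j => z (nj j)) atTop (𝓝 w) →
      Tendsto (fun j => z (nj j + 1)) atTop (𝓝 (g w)) := fun w => (hz w).choose_spec
  have hgz : ∀ n : ℕ, g (z n) = z (n + 1) := by
    intro n
    have h1 := hspec (z n) (fun _ => n) tendsto_const_nhds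
    exact tendsto_nhds_unique h1 tendsto_const_nhds
  set S : Set ℂ := closure (Set.range z) with hS
  -- key approximation: for every w ∈ S and ε > 0, there is m with
  -- dist (z m) w < ε and dist (z (m+1)) (g w) < ε
  have key : ∀ w ∈ S, ∀ ε : ℝ, 0 < ε → ∃ m : ℕ,
      dist (z m) w < ε ∧ dist (z (m + 1)) (g w) < ε := by
    intro w hw ε hε
    obtain ⟨x, hx, hxw⟩ := mem_closure_iff_seq_limit.mp hw
    choose m hm using hx
    have hzm : Tendsto (fun j => z (m j)) atTop (𝓝 w) := by
      convert hxw using 1; ext j; exact hm j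
    have h1 := hspec w m hzm
    have h2 := (Metric.tendsto_atTop.mp hzm) ε hε
    have h3 := (Metric.tendsto_atTop.mp h1) ε hε
    obtain ⟨N1, hN1⟩ := h2
    obtain ⟨N2, hN2⟩ := h3
    exact ⟨m (max N1 N2), hN1 _ (le_max_left _ _), hN2 _ (le_max_right _ _)⟩
  -- g restricted to S is sequentially continuous
  have hcont : Continuous (fun x : S => g x) := by
    apply SeqContinuous.continuous
    intro u x hux
    rw [Metric.tendsto_atTop]
    intro ε hε
    -- choose n k good approximations for u k
    have hch : ∀ k : ℕ, ∃ m : ℕ, dist (z m) (u k : ℂ) < 1 / (k + 1) ∧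
        dist (z (m + 1)) (g (u k : ℂ)) < 1 / (k + 1) := by
      intro k
      exact key _ (u k).2 _ (by positivity)
    choose n hn1 hn2 using hch
    have hxS := (x : ℂ)
    have hinv : Tendsto (fun k : ℕ => (1 : ℝ) / (k + 1)) atTop (𝓝 0) :=
      tendsto_one_div_add_atTop_nhds_zero_nat
    have hux' : Tendsto (fun k => ((u k : ℂ))) atTop (𝓝 (x : ℂ)) :=
      ((continuous_subtype_val.tendsto x).comp hux)
    -- z (n k) → x
    have hzn : Tendsto (fun k => z (n k)) atTop (𝓝 (x : ℂ)) := by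
      rw [tendsto_iff_dist_tendsto_zero]
      have hb : ∀ k, dist (z (n k)) (x : ℂ) ≤ 1 / (k + 1) + dist ((u k : ℂ)) (x : ℂ) := by
        intro k
        calc dist (z (n k)) (x : ℂ) ≤ dist (z (n k)) ((u k : ℂ)) + dist ((u k : ℂ)) (x : ℂ) :=
              dist_triangle _ _ _
          _ ≤ 1 / (k + 1) + dist ((u k : ℂ)) (x : ℂ) := by
              have := (hn1 k).le; linarith
      have hlim : Tendsto (fun k : ℕ => 1 / ((k : ℝ) + 1) + dist ((u k : ℂ)) (x : ℂ))
          atTop (𝓝 0) := by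
        have h2 : Tendsto (fun k => dist ((u k : ℂ)) (x : ℂ)) atTop (𝓝 0) :=
          tendsto_iff_dist_tendsto_zero.mp hux'
        simpa using hinv.add h2
      exact squeeze_zero (fun k => dist_nonneg) hb hlim
    -- hence z (n k + 1) → g x
    have hznn := hspec (x : ℂ) n hzn
    -- dist (g (u k)) (g x) ≤ 1/(k+1) + dist (z (n k + 1)) (g x) → 0
    have h3 : Tendsto (fun k => dist (z (n k + 1)) (g (x : ℂ))) atTop (𝓝 0) :=
      tendsto_iff_dist_tendsto_zero.mp hznn
    have hlim2 : Tendsto (fun k : ℕ => 1 / ((k : ℝ) + 1) + dist (z (n k + 1)) (g (x : ℂ)))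
        atTop (𝓝 0) := by simpa using hinv.add h3
    have hfin : Tendsto (fun k => dist (g ((u k : ℂ))) (g (x : ℂ))) atTop (𝓝 0) := by
      apply squeeze_zero (fun k => dist_nonneg)
      · intro k
        calc dist (g ((u k : ℂ))) (g (x : ℂ))
            ≤ dist (g ((u k : ℂ))) (z (n k + 1)) + dist (z (n k + 1)) (g (x : ℂ)) :=
              dist_triangle _ _ _
          _ ≤ 1 / (k + 1) + dist (z (n k + 1)) (g (x : ℂ)) := by
              have := (hn2 k).le; rw [dist_comm] at this; linarith
      · exact hlim2
    obtain ⟨N, hN⟩ := (Metric.tendsto_atTop.mp hfin) ε hε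
    exact ⟨N, fun k hk => by simpa [Real.dist_eq, abs_of_nonneg dist_nonneg] using hN k hk⟩
  -- Tietze extension
  obtain ⟨F, hF⟩ := ContinuousMap.exists_restrict_eq (Y := ℂ) isClosed_closure
    ⟨fun x : S => g x, hcont⟩
  refine ⟨F, F.continuous, fun n => ?_⟩
  have hzn : z n ∈ S := subset_closure ⟨n, rfl⟩
  have := ContinuousMap.congr_fun hF ⟨z n, hzn⟩
  simp only [ContinuousMap.restrict_apply, ContinuousMap.coe_mk] at this
  rw [this, hgz]
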